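/- arXiv:2402.14490 — 3 statements merged into one kernel-verified Lean document; each statement's English description precedes it below -/
import Mathlib

section
/- The gradient of the LogSumExp smooth minimum J_LSE with respect to a centroid c_k equals -∑_n u_{kn}(x_n - c_k), where u_{kn} = e^{-λ d_{kn}}/∑_i e^{-λ d_{in}} and d_{kn} = ½‖x_n - c_k‖². -/
open Finset Real in
set_option maxHeartbeats 1000000 in
/-- The gradient of the LogSumExp smooth K-means objective `J_LSE` with respect to the
centroid `c k` equals `-∑ n, u k n • (x n - c k)`, where
`u k n = exp (-λ d k n) / ∑ i, exp (-λ d i n)` and `d k n = ½ ‖x n - c k‖²`. -/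
theorem grad_J_LSE {K N P : ℕ} (hK : 0 < K) (lam : ℝ) (hlam : 0 < lam)
    (x : Fin N → EuclideanSpace ℝ (Fin P)) (c : Fin K → EuclideanSpace ℝ (Fin P))
    (k : Fin K) :
    HasGradientAt
      (fun ck : EuclideanSpace ℝ (Fin P) =>
        ∑ n, -(1 / lam) *
          Real.log (∑ i, Real.exp (-lam * (‖x n - Function.update c k ck i‖ ^ 2 / 2))))
      (-∑ n, (Real.exp (-lam * (‖x n - c k‖ ^ 2 / 2)) /
          ∑ i, Real.exp (-lam * (‖x n - c i‖ ^ 2 / 2))) • (x n - c k))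
      (c k) := by
  classical
  have harg : ∀ t : ℝ, -lam * (t / 2) = -lam / 2 * t := fun t => by ring
  simp only [harg]
  set y₀ := c k with hy₀
  set C : Fin N → ℝ := fun n => ∑ i ∈ ({k}ᶜ : Finset (Fin K)),
      Real.exp (-lam / 2 * ‖x n - c i‖ ^ 2) with hC
  have hsplit : ∀ g : Fin K → ℝ, ∑ i, g i = g k + ∑ i ∈ ({k}ᶜ : Finset (Fin K)), g i :=
    fun g => Fintype.sum_eq_add_sum_compl k g
  have hCnn : ∀ n, 0 ≤ C n := fun n => Finset.sum_nonneg fun i _ => (Real.exp_pos _).le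
  have hterm : ∀ (n : Fin N) (ck : EuclideanSpace ℝ (Fin P)),
      (∑ i, Real.exp (-lam / 2 * ‖x n - Function.update c k ck i‖ ^ 2))
        = Real.exp (-lam / 2 * ‖x n - ck‖ ^ 2) + C n := by
    intro n ck
    rw [hsplit]
    congr 1
    · rw [Function.update_self]
    · exact Finset.sum_congr rfl fun i hi => by
        rw [Function.update_of_ne (Finset.mem_compl.mp hi ∘ Finset.mem_singleton.mpr)]
  have hfun : (fun ck : EuclideanSpace ℝ (Fin P) =>
        ∑ n, -(1 / lam) *
          Real.log (∑ i, Real.exp (-lam / 2 * ‖x n - Function.update c k ck i‖ ^ 2)))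
      = fun ck => ∑ n, -(1 / lam) *
          Real.log (Real.exp (-lam / 2 * ‖x n - ck‖ ^ 2) + C n) := by
    funext ck
    exact Finset.sum_congr rfl fun n _ => by rw [hterm]
  rw [hfun]
  have hS : ∀ n, (∑ i, Real.exp (-lam / 2 * ‖x n - c i‖ ^ 2))
      = Real.exp (-lam / 2 * ‖x n - y₀‖ ^ 2) + C n := fun n => hsplit _
  have hpos : ∀ n, (0:ℝ) < Real.exp (-lam / 2 * ‖x n - y₀‖ ^ 2) + C n := fun n =>
    lt_of_lt_of_le (Real.exp_pos _) (le_add_of_nonneg_right (hCnn n))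
  rw [hasGradientAt_iff_hasFDerivAt]
  have key : ∀ n : Fin N, HasFDerivAt
      (fun ck : EuclideanSpace ℝ (Fin P) =>
        -(1 / lam) * Real.log (Real.exp (-lam / 2 * ‖x n - ck‖ ^ 2) + C n))
      ((-(1/lam)) • ((Real.exp (-lam / 2 * ‖x n - y₀‖ ^ 2) + C n)⁻¹ •
        (Real.exp (-lam / 2 * ‖x n - y₀‖ ^ 2) •
          ((-lam/2) • (2 • (innerSL ℝ (x n - y₀)).comp
            ((0 : EuclideanSpace ℝ (Fin P) →L[ℝ] EuclideanSpace ℝ (Fin P))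
              - ContinuousLinearMap.id ℝ _)))))) y₀ := by
    intro n
    have h1 : HasFDerivAt (fun y : EuclideanSpace ℝ (Fin P) => x n - y)
        ((0 : EuclideanSpace ℝ (Fin P) →L[ℝ] EuclideanSpace ℝ (Fin P))
          - ContinuousLinearMap.id ℝ _) y₀ :=
      (hasFDerivAt_const (x n) y₀).sub (hasFDerivAt_id y₀)
    exact ((((h1.norm_sq.const_mul (-lam/2)).exp.add_const (C n)).log
      (hpos n).ne').const_mul (-(1/lam)))
  have hsum := HasFDerivAt.fun_sum (u := Finset.univ) fun n _ => key n
  refine hsum.congr_fderiv ?_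
  ext v
  simp only [ContinuousLinearMap.sum_apply, ContinuousLinearMap.smul_apply,
    ContinuousLinearMap.coe_smul', Pi.smul_apply, ContinuousLinearMap.coe_comp',
    Function.comp_apply, ContinuousLinearMap.sub_apply, ContinuousLinearMap.zero_apply,
    ContinuousLinearMap.id_apply, innerSL_apply_apply, zero_sub, inner_neg_right,
    InnerProductSpace.toDual_apply_apply, inner_neg_left, sum_inner, real_inner_smul_left,
    smul_eq_mul]
  simp only [ContinuousLinearMap.neg_apply, ContinuousLinearMap.id_apply, inner_neg_right,
    smul_eq_mul, nsmul_eq_mul, Nat.cast_ofNat]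
  rw [← Finset.sum_neg_distrib]
  refine Finset.sum_congr rfl fun n _ => ?_
  rw [hS n]
  have h0 := (hpos n).ne'
  field_simp
end

section
/- One step of the smooth K-means update decreases the objective by at least half the squared gradient norm times the learning rate: if c_k^{(τ+1)} = c_k^{(τ)} - γ_k^{(τ)} ∂_{c_k}J(c^{(τ)}) with γ_k^{(τ)} = 1/∑_n (∂h/∂d_k)|_{n,τ} and all ∂h/∂d_k ≥ 0 with positive column sums, and h is concave, then J(c^{(τ)}) - J(c^{(τ+1)}) ≥ ∑_{k=1}^K (γ_k^{(τ)}/2)·‖∂_{c_k}J(c^{(τ)})‖². -/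
lemma concave_grad_ineq {E : Type*} [NormedAddCommGroup E] [NormedSpace ℝ E]
    {s : Set E} {h : E → ℝ} {f' : E →L[ℝ] ℝ} (hc : ConcaveOn ℝ s h)
    {d d' : E} (hd : d ∈ s) (hd' : d' ∈ s) (hder : HasFDerivAt h f' d) :
    h d' - h d ≤ f' (d' - d) := by
  set v := d' - d with hv
  set φ : ℝ → ℝ := fun t => h (d + t • v) with hφdef
  have hψ : HasDerivAt (fun t : ℝ => d + t • v) v 0 := by
    simpa using ((hasDerivAt_id (0:ℝ)).smul_const v).const_add d
  have hder' : HasFDerivAt h f' ((fun t : ℝ => d + t • v) 0) := by simpa using hder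
  have hφ : HasDerivAt φ (f' v) 0 := hder'.comp_hasDerivAt 0 hψ
  have htend : Filter.Tendsto (slope φ 0) (nhdsWithin 0 (Set.Ioi 0)) (nhds (f' v)) :=
    (hasDerivAt_iff_tendsto_slope.mp hφ).mono_left
      (nhdsWithin_mono _ (fun t ht => ne_of_gt ht))
  have hbound : ∀ t ∈ Set.Ioc (0:ℝ) 1, h d' - h d ≤ slope φ 0 t := by
    intro t ht
    have hcomb := hc.2 hd hd' (by linarith [ht.2] : (0:ℝ) ≤ 1 - t) (le_of_lt ht.1)
      (by ring)
    have heq : (1 - t) • d + t • d' = d + t • v := by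
      rw [hv]; module
    rw [heq] at hcomb
    have hφ0 : φ 0 = h d := by simp [hφdef]
    simp only [smul_eq_mul] at hcomb
    rw [slope_def_field, hφ0, sub_zero, le_div_iff₀ ht.1]
    have hφt : φ t = h (d + t • v) := rfl
    nlinarith [hcomb]
  refine ge_of_tendsto htend ?_
  filter_upwards [Ioc_mem_nhdsGT_of_mem (Set.mem_Ico.mpr ⟨le_refl 0, zero_lt_one⟩)] with t ht
  exact hbound t ht

/-- One step of the smooth K-means update decreases the objective by at least half the
squared gradient norm times the learning rate. -/
theorem skm_one_step_decrease {K N P : ℕ}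
    (h : (Fin K → ℝ) → ℝ) (h' : (Fin K → ℝ) → ((Fin K → ℝ) →L[ℝ] ℝ))
    (hconc : ConcaveOn ℝ (Set.Ici 0) h)
    (hdiff : ∀ d ∈ Set.Ici (0 : Fin K → ℝ), HasFDerivAt h (h' d) d)
    (x : Fin N → EuclideanSpace ℝ (Fin P))
    (c c' : Fin K → EuclideanSpace ℝ (Fin P))
    (g : Fin K → Fin N → ℝ)
    (hg : ∀ k n, g k n = h' (fun i => ‖x n - c i‖ ^ 2 / 2) (Pi.single k 1))
    (hg0 : ∀ k n, 0 ≤ g k n)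
    (hsum : ∀ k, 0 < ∑ n, g k n)
    (γ : Fin K → ℝ) (hγ : ∀ k, γ k = (∑ n, g k n)⁻¹)
    (grad : Fin K → EuclideanSpace ℝ (Fin P))
    (hgrad : ∀ k, grad k = -∑ n, g k n • (x n - c k))
    (hupdate : ∀ k, c' k = c k - γ k • grad k) :
    (∑ n, h (fun i => ‖x n - c i‖ ^ 2 / 2)) -
        (∑ n, h (fun i => ‖x n - c' i‖ ^ 2 / 2)) ≥
      ∑ k, (γ k / 2) * ‖grad k‖ ^ 2 := by
  have hdmem : ∀ n, (fun i => ‖x n - c i‖ ^ 2 / 2) ∈ Set.Ici (0 : Fin K → ℝ) := by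
    intro n
    simp only [Set.mem_Ici, Pi.le_def, Pi.zero_apply]
    intro i; positivity
  have hd'mem : ∀ n, (fun i => ‖x n - c' i‖ ^ 2 / 2) ∈ Set.Ici (0 : Fin K → ℝ) := by
    intro n
    simp only [Set.mem_Ici, Pi.le_def, Pi.zero_apply]
    intro i; positivity
  have key : ∀ n, h (fun i => ‖x n - c' i‖ ^ 2 / 2) - h (fun i => ‖x n - c i‖ ^ 2 / 2) ≤
      ∑ k, g k n * (‖x n - c' k‖ ^ 2 / 2 - ‖x n - c k‖ ^ 2 / 2) := by
    intro n
    have h1 := concave_grad_ineq hconc (hdmem n) (hd'mem n)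
      (hdiff _ (hdmem n))
    refine h1.trans_eq ?_
    have hvec : (fun i => ‖x n - c' i‖ ^ 2 / 2) - (fun i => ‖x n - c i‖ ^ 2 / 2) =
        ∑ k, (‖x n - c' k‖ ^ 2 / 2 - ‖x n - c k‖ ^ 2 / 2) • Pi.single k (1:ℝ) := by
      simp only [← Pi.single_smul, smul_eq_mul, mul_one]
      ext i
      rw [Finset.univ_sum_single (fun i => ‖x n - c' i‖ ^ 2 / 2 - ‖x n - c i‖ ^ 2 / 2)]
      simp
    rw [hvec, map_sum]
    simp only [map_smul, smul_eq_mul, ← hg]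
    exact Finset.sum_congr rfl fun k _ => mul_comm _ _
  have keyk : ∀ k, ∑ n, g k n * (‖x n - c' k‖ ^ 2 / 2 - ‖x n - c k‖ ^ 2 / 2) =
      -((γ k / 2) * ‖grad k‖ ^ 2) := by
    intro k
    have hγpos : 0 < γ k := by rw [hγ]; exact inv_pos.mpr (hsum k)
    have hx : ∀ n, x n - c' k = (x n - c k) + γ k • grad k := by
      intro n; rw [hupdate]; module
    have hdv : ∀ n, ‖x n - c' k‖ ^ 2 / 2 - ‖x n - c k‖ ^ 2 / 2 =
        inner ℝ (x n - c k) (γ k • grad k) + ‖γ k • grad k‖ ^ 2 / 2 := by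
      intro n; rw [hx n, norm_add_sq_real]; ring
    have step1 : ∑ n, g k n * (‖x n - c' k‖ ^ 2 / 2 - ‖x n - c k‖ ^ 2 / 2) =
        inner ℝ ((∑ n, g k n • (x n - c k)) : EuclideanSpace ℝ (Fin P)) (γ k • grad k) +
          (∑ n, g k n) * (‖γ k • grad k‖ ^ 2 / 2) := by
      rw [sum_inner, Finset.sum_mul, ← Finset.sum_add_distrib]
      refine Finset.sum_congr rfl fun n _ => ?_
      rw [hdv n, real_inner_smul_left]
      ring
    rw [step1]
    have hsg : (∑ n, g k n • (x n - c k)) = -grad k := by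
      rw [hgrad]; simp
    rw [hsg]
    have hinner : inner ℝ (-grad k : EuclideanSpace ℝ (Fin P)) (γ k • grad k) =
        -(γ k * ‖grad k‖ ^ 2) := by
      rw [inner_neg_left, real_inner_smul_right, real_inner_self_eq_norm_sq]
    rw [hinner]
    have hnorm : ‖γ k • grad k‖ ^ 2 = γ k ^ 2 * ‖grad k‖ ^ 2 := by
      rw [norm_smul, Real.norm_eq_abs, mul_pow, sq_abs]
    have hsg2 : (∑ n, g k n) = (γ k)⁻¹ := by
      rw [hγ, inv_inv]
    rw [hnorm, hsg2]
    field_simp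
    ring
  have main : (∑ n, h (fun i => ‖x n - c' i‖ ^ 2 / 2)) -
      (∑ n, h (fun i => ‖x n - c i‖ ^ 2 / 2)) ≤
      -(∑ k, (γ k / 2) * ‖grad k‖ ^ 2) := by
    calc (∑ n, h (fun i => ‖x n - c' i‖ ^ 2 / 2)) -
        (∑ n, h (fun i => ‖x n - c i‖ ^ 2 / 2))
        = ∑ n, (h (fun i => ‖x n - c' i‖ ^ 2 / 2) - h (fun i => ‖x n - c i‖ ^ 2 / 2)) := by
          rw [Finset.sum_sub_distrib]
      _ ≤ ∑ n, ∑ k, g k n * (‖x n - c' k‖ ^ 2 / 2 - ‖x n - c k‖ ^ 2 / 2) :=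
          Finset.sum_le_sum fun n _ => key n
      _ = ∑ k, ∑ n, g k n * (‖x n - c' k‖ ^ 2 / 2 - ‖x n - c k‖ ^ 2 / 2) :=
          Finset.sum_comm
      _ = ∑ k, -((γ k / 2) * ‖grad k‖ ^ 2) := Finset.sum_congr rfl fun k _ => keyk k
      _ = -(∑ k, (γ k / 2) * ‖grad k‖ ^ 2) := by rw [Finset.sum_neg_distrib]
  linarith
end

section
/- Under the smooth K-means update with concave, lower-bounded h and learning rates bounded below by ε > 0, the sequence of objective values J^{(τ)} is non-increasing and the gradients converge to zero: lim_{τ→∞} ∂_{c_k}J(c^{(τ)}) = 0 for all k. -/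
lemma skm_concave_tangent {E : Type*} [NormedAddCommGroup E] [NormedSpace ℝ E]
    {h : E → ℝ} {s : Set E} (hconc : ConcaveOn ℝ s h)
    {x y : E} (hx : x ∈ s) (hy : y ∈ s) {h' : E →L[ℝ] ℝ}
    (hd : HasFDerivAt h h' x) : h y ≤ h x + h' (y - x) := by
  set φ : ℝ → ℝ := fun t => h (AffineMap.lineMap x y t) with hφdef
  have hφ : ConcaveOn ℝ ((AffineMap.lineMap x y : ℝ →ᵃ[ℝ] E) ⁻¹' s) φ :=
    hconc.comp_affineMap _
  have h0 : (0:ℝ) ∈ (AffineMap.lineMap x y : ℝ →ᵃ[ℝ] E) ⁻¹' s := by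
    simp [Set.mem_preimage, hx]
  have h1 : (1:ℝ) ∈ (AffineMap.lineMap x y : ℝ →ᵃ[ℝ] E) ⁻¹' s := by
    simp [Set.mem_preimage, hy]
  have hline : HasDerivAt (fun t : ℝ => (AffineMap.lineMap x y : ℝ →ᵃ[ℝ] E) t) (y - x) 0 := by
    simp only [AffineMap.lineMap_apply, vsub_eq_sub, vadd_eq_add]
    simpa using ((hasDerivAt_id (0:ℝ)).smul_const (y - x)).add_const x
  have hder : HasDerivAt φ (h' (y - x)) 0 := by
    have hd' : HasFDerivAt h h' ((AffineMap.lineMap x y : ℝ →ᵃ[ℝ] E) 0) := by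
      simpa using hd
    exact hd'.comp_hasDerivAt 0 hline
  have := hφ.slope_le_of_hasDerivAt h0 h1 zero_lt_one hder
  have hs : slope φ 0 1 = φ 1 - φ 0 := by simp [slope]
  have hφ0 : φ 0 = h x := by simp [hφdef]
  have hφ1 : φ 1 = h y := by simp [hφdef]
  rw [hs, hφ0, hφ1] at this
  linarith

/-- Under the smooth K-means iteration with concave, lower-bounded `h` and learning rates
bounded below by `ε > 0`, the objective values are non-increasing and the gradients
converge to zero. -/
theorem skm_convergence {K N P : ℕ}
    (h : (Fin K → ℝ) → ℝ) (h' : (Fin K → ℝ) → ((Fin K → ℝ) →L[ℝ] ℝ))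
    (hconc : ConcaveOn ℝ (Set.Ici 0) h)
    (hdiff : ∀ d ∈ Set.Ici (0 : Fin K → ℝ), HasFDerivAt h (h' d) d)
    (hbelow : ∃ B : ℝ, ∀ d ∈ Set.Ici (0 : Fin K → ℝ), B ≤ h d)
    (x : Fin N → EuclideanSpace ℝ (Fin P))
    (c : ℕ → Fin K → EuclideanSpace ℝ (Fin P))
    (g : ℕ → Fin K → Fin N → ℝ)
    (hg : ∀ τ k n, g τ k n = h' (fun i => ‖x n - c τ i‖ ^ 2 / 2) (Pi.single k 1))
    (hg0 : ∀ τ k n, 0 ≤ g τ k n)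
    (γ : ℕ → Fin K → ℝ) (hγ : ∀ τ k, γ τ k = (∑ n, g τ k n)⁻¹)
    (ε : ℝ) (hε : 0 < ε) (hγε : ∀ τ k, ε ≤ γ τ k)
    (grad : ℕ → Fin K → EuclideanSpace ℝ (Fin P))
    (hgrad : ∀ τ k, grad τ k = -∑ n, g τ k n • (x n - c τ k))
    (hupdate : ∀ τ k, c (τ + 1) k = c τ k - γ τ k • grad τ k) :
    (∀ τ, (∑ n, h (fun i => ‖x n - c (τ + 1) i‖ ^ 2 / 2)) ≤
        ∑ n, h (fun i => ‖x n - c τ i‖ ^ 2 / 2)) ∧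
    ∀ k, Filter.Tendsto (fun τ => grad τ k) Filter.atTop (nhds 0) := by
  classical
  set d : ℕ → Fin N → (Fin K → ℝ) := fun τ n i => ‖x n - c τ i‖ ^ 2 / 2 with hddef
  have hdmem : ∀ τ n, d τ n ∈ Set.Ici (0 : Fin K → ℝ) := by
    intro τ n
    rw [Set.mem_Ici]
    intro i
    simp only [hddef, Pi.zero_apply]
    positivity
  set J : ℕ → ℝ := fun τ => ∑ n, h (d τ n) with hJdef
  -- positivity of γ and sum of g
  have hγpos : ∀ τ k, 0 < γ τ k := fun τ k => lt_of_lt_of_le hε (hγε τ k)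
  have hγSg : ∀ τ k, γ τ k * ∑ n, g τ k n = 1 := by
    intro τ k
    have hSg : (∑ n, g τ k n) ≠ 0 := by
      intro h0
      have := hγpos τ k
      rw [hγ, h0] at this
      simp at this
    rw [hγ]
    exact inv_mul_cancel₀ hSg
  -- key descent inequality
  have key : ∀ τ, J (τ + 1) + ε / 2 * ∑ k, ‖grad τ k‖ ^ 2 ≤ J τ := by
    intro τ
    -- tangent inequality per point
    have tangent : ∀ n, h (d (τ+1) n) ≤ h (d τ n) + h' (d τ n) (d (τ+1) n - d τ n) := by
      intro n
      exact skm_concave_tangent hconc (hdmem τ n) (hdmem (τ+1) n) (hdiff _ (hdmem τ n))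
    -- expand the derivative term
    have expand : ∀ n, h' (d τ n) (d (τ+1) n - d τ n)
        = ∑ k, (d (τ+1) n k - d τ n k) * g τ k n := by
      intro n
      have hrepr : d (τ+1) n - d τ n = ∑ k, (d (τ+1) n k - d τ n k) • (Pi.single k 1 : Fin K → ℝ) := by
        funext j
        simp [Finset.sum_apply, Pi.single_apply]
      rw [hrepr, map_sum]
      refine Finset.sum_congr rfl fun k _ => ?_
      rw [map_smul, smul_eq_mul, hg]
    -- Δ n k
    have hΔ : ∀ n k, d (τ+1) n k - d τ n k
        = γ τ k * (inner ℝ (x n - c τ k) (grad τ k) : ℝ)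
          + (γ τ k)^2 * ‖grad τ k‖ ^ 2 / 2 := by
      intro n k
      have hxc : x n - c (τ+1) k = (x n - c τ k) + γ τ k • grad τ k := by
        rw [hupdate]; abel
      have hnorm : ‖x n - c (τ+1) k‖ ^ 2
          = ‖x n - c τ k‖ ^ 2 + 2 * (inner ℝ (x n - c τ k) (γ τ k • grad τ k) : ℝ)
            + ‖γ τ k • grad τ k‖ ^ 2 := by
        rw [hxc]; exact norm_add_sq_real _ _
      have h1 : (inner ℝ (x n - c τ k) (γ τ k • grad τ k) : ℝ)
          = γ τ k * (inner ℝ (x n - c τ k) (grad τ k) : ℝ) := real_inner_smul_right _ _ _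
      have h2 : ‖γ τ k • grad τ k‖ ^ 2 = (γ τ k)^2 * ‖grad τ k‖ ^ 2 := by
        rw [norm_smul]
        rw [mul_pow, Real.norm_eq_abs, sq_abs]
      simp only [hddef]
      rw [hnorm, h1, h2]
      ring
    -- per k sum
    have perk : ∀ k, (∑ n, (d (τ+1) n k - d τ n k) * g τ k n)
        = -(γ τ k / 2) * ‖grad τ k‖ ^ 2 := by
      intro k
      have hsum : (∑ n, g τ k n • (x n - c τ k)) = -grad τ k := by
        rw [hgrad]; abel
      have hinner : (∑ n, g τ k n * (inner ℝ (x n - c τ k) (grad τ k) : ℝ))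
          = -‖grad τ k‖ ^ 2 := by
        have : (∑ n, g τ k n * (inner ℝ (x n - c τ k) (grad τ k) : ℝ))
            = (inner ℝ (∑ n, g τ k n • (x n - c τ k)) (grad τ k) : ℝ) := by
          rw [sum_inner]
          exact Finset.sum_congr rfl fun n _ => (real_inner_smul_left _ _ _).symm
        rw [this, hsum, inner_neg_left, real_inner_self_eq_norm_sq]
      calc (∑ n, (d (τ+1) n k - d τ n k) * g τ k n)
          = ∑ n, (γ τ k * (inner ℝ (x n - c τ k) (grad τ k) : ℝ)
              + (γ τ k)^2 * ‖grad τ k‖ ^ 2 / 2) * g τ k n := by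
            refine Finset.sum_congr rfl fun n _ => ?_; rw [hΔ]
        _ = γ τ k * (∑ n, g τ k n * (inner ℝ (x n - c τ k) (grad τ k) : ℝ))
              + (γ τ k)^2 * ‖grad τ k‖ ^ 2 / 2 * (∑ n, g τ k n) := by
            rw [Finset.mul_sum, Finset.mul_sum, ← Finset.sum_add_distrib]
            refine Finset.sum_congr rfl fun n _ => ?_; ring
        _ = -(γ τ k) * ‖grad τ k‖ ^ 2 + γ τ k / 2 * ‖grad τ k‖ ^ 2
              * (γ τ k * (∑ n, g τ k n)) := by
            rw [hinner]; ring
        _ = -(γ τ k / 2) * ‖grad τ k‖ ^ 2 := by rw [hγSg]; ring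
    -- total derivative sum
    have total : (∑ n, h' (d τ n) (d (τ+1) n - d τ n))
        ≤ -(ε / 2) * ∑ k, ‖grad τ k‖ ^ 2 := by
      calc (∑ n, h' (d τ n) (d (τ+1) n - d τ n))
          = ∑ n, ∑ k, (d (τ+1) n k - d τ n k) * g τ k n := by
            exact Finset.sum_congr rfl fun n _ => expand n
        _ = ∑ k, ∑ n, (d (τ+1) n k - d τ n k) * g τ k n := Finset.sum_comm
        _ = ∑ k, -(γ τ k / 2) * ‖grad τ k‖ ^ 2 := by
            exact Finset.sum_congr rfl fun k _ => perk k
        _ ≤ ∑ k, -(ε / 2) * ‖grad τ k‖ ^ 2 := by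
            refine Finset.sum_le_sum fun k _ => ?_
            have := hγε τ k
            nlinarith [sq_nonneg ‖grad τ k‖]
        _ = -(ε / 2) * ∑ k, ‖grad τ k‖ ^ 2 := by rw [← Finset.mul_sum]
    have hsumle : J (τ + 1) ≤ J τ + ∑ n, h' (d τ n) (d (τ+1) n - d τ n) := by
      rw [hJdef, ← Finset.sum_add_distrib]
      exact Finset.sum_le_sum fun n _ => tangent n
    have : J (τ + 1) ≤ J τ + -(ε / 2) * ∑ k, ‖grad τ k‖ ^ 2 := le_trans hsumle (by linarith)
    linarith
  have hgradsq_nonneg : ∀ τ, 0 ≤ ∑ k, ‖grad τ k‖ ^ 2 :=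
    fun τ => Finset.sum_nonneg fun k _ => sq_nonneg _
  constructor
  · intro τ
    have := key τ
    have h2 := hgradsq_nonneg τ
    have hεs : 0 ≤ ε / 2 * ∑ k, ‖grad τ k‖ ^ 2 := by positivity
    calc (∑ n, h (fun i => ‖x n - c (τ + 1) i‖ ^ 2 / 2)) = J (τ + 1) := rfl
      _ ≤ J τ := by linarith
      _ = ∑ n, h (fun i => ‖x n - c τ i‖ ^ 2 / 2) := rfl
  · -- convergence of J
    obtain ⟨B, hB⟩ := hbelow
    have hJanti : Antitone J := by
      apply antitone_nat_of_succ_le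
      intro τ
      have := key τ
      have hεs : 0 ≤ ε / 2 * ∑ k, ‖grad τ k‖ ^ 2 := by
        have := hgradsq_nonneg τ; positivity
      linarith
    have hJbdd : BddBelow (Set.range J) := by
      refine ⟨(N : ℝ) * B, ?_⟩
      rintro _ ⟨τ, rfl⟩
      calc (N : ℝ) * B = ∑ _n : Fin N, B := by simp [Finset.sum_const, mul_comm]
        _ ≤ ∑ n, h (d τ n) := Finset.sum_le_sum fun n _ => hB _ (hdmem τ n)
    have hJt : Filter.Tendsto J Filter.atTop (nhds (⨅ τ, J τ)) :=
      tendsto_atTop_ciInf hJanti hJbdd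
    have hJt1 : Filter.Tendsto (fun τ => J (τ + 1)) Filter.atTop (nhds (⨅ τ, J τ)) :=
      hJt.comp (Filter.tendsto_add_atTop_nat 1)
    have hdiff0 : Filter.Tendsto (fun τ => J τ - J (τ + 1)) Filter.atTop (nhds 0) := by
      have := hJt.sub hJt1
      simpa using this
    intro k
    have hsq : Filter.Tendsto (fun τ => ‖grad τ k‖ ^ 2) Filter.atTop (nhds 0) := by
      have hlim : Filter.Tendsto (fun τ => 2 / ε * (J τ - J (τ + 1))) Filter.atTop (nhds 0) := by
        have := hdiff0.const_mul (2 / ε)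
        simpa using this
      refine squeeze_zero (fun τ => sq_nonneg _) (fun τ => ?_) hlim
      have h1 : ‖grad τ k‖ ^ 2 ≤ ∑ k', ‖grad τ k'‖ ^ 2 :=
        Finset.single_le_sum (fun k' _ => sq_nonneg ‖grad τ k'‖) (Finset.mem_univ k)
      have h2 : ε / 2 * ∑ k', ‖grad τ k'‖ ^ 2 ≤ J τ - J (τ + 1) := by
        have := key τ; linarith
      have hε2 : (0:ℝ) < 2 / ε := by positivity
      have h3 : ∑ k', ‖grad τ k'‖ ^ 2 ≤ 2 / ε * (J τ - J (τ + 1)) := by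
        rw [div_mul_eq_mul_div, le_div_iff₀ hε]
        nlinarith [hgradsq_nonneg τ]
      linarith
    have hnorm : Filter.Tendsto (fun τ => ‖grad τ k‖) Filter.atTop (nhds 0) := by
      have := hsq.sqrt
      simpa [Real.sqrt_sq (norm_nonneg _)] using this
    exact tendsto_zero_iff_norm_tendsto_zero.mpr hnorm
end
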